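/- The denominator (1+x_1)(1+y_1) + 2 - 2x_1y_1 + 2∑_{i=2}^{n+1} x_i y_i is strictly positive for all points (x, y) ∈ S^n × S^n with (x, y) ≠ (-e, -e). -/
import Mathlib


/-- The point `-e = (-1,0,…,0) ∈ ℝ^{n+1}`. -/
noncomputable def negE (n : ℕ) : Fin (n + 1) → ℝ := Fin.cons (-1) 0

/-- the denominator `(1+x₁)(1+y₁) + 2 - 2x₁y₁ + 2∑_{i≥2} xᵢyᵢ` is
strictly positive for all `(x,y) ∈ Sⁿ × Sⁿ` with `(x,y) ≠ (-e,-e)`. -/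
theorem stmt5 (n : ℕ) (x y : Fin (n + 1) → ℝ)
    (hx : ∑ i, x i ^ 2 = 1) (hy : ∑ i, y i ^ 2 = 1)
    (h : ¬(x = negE n ∧ y = negE n)) :
    0 < (1 + x 0) * (1 + y 0) + 2 - 2 * x 0 * y 0 +
        2 * ∑ i : Fin n, x i.succ * y i.succ := by
  by_contra hle
  push_neg at hle
  apply h
  rw [Fin.sum_univ_succ] at hx hy
  have hexp : ∑ i : Fin n, (x i.succ + y i.succ) ^ 2 =
      (∑ i : Fin n, x i.succ ^ 2) + 2 * (∑ i : Fin n, x i.succ * y i.succ) +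
        (∑ i : Fin n, y i.succ ^ 2) := by
    rw [Finset.mul_sum, ← Finset.sum_add_distrib, ← Finset.sum_add_distrib]
    exact Finset.sum_congr rfl fun i _ => by ring
  have hSsum : 0 ≤ ∑ i : Fin n, (x i.succ + y i.succ) ^ 2 :=
    Finset.sum_nonneg fun i _ => sq_nonneg _
  have hkey : (x 0 + (1 - y 0) / 2) ^ 2 + 3 / 4 * (1 + y 0) ^ 2 +
      (∑ i : Fin n, (x i.succ + y i.succ) ^ 2) ≤ 0 := by
    rw [hexp]; nlinarith [hx, hy, hle]
  have hb : y 0 = -1 := by nlinarith [sq_nonneg (x 0 + (1 - y 0) / 2), sq_nonneg (1 + y 0)]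
  have ha : x 0 = -1 := by nlinarith [sq_nonneg (x 0 + (1 - y 0) / 2), sq_nonneg (1 + y 0)]
  have hxs : ∑ i : Fin n, x i.succ ^ 2 = 0 := by nlinarith [hx]
  have hys : ∑ i : Fin n, y i.succ ^ 2 = 0 := by nlinarith [hy]
  have hxz : ∀ i : Fin n, x i.succ = 0 := by
    intro i
    have := (Finset.sum_eq_zero_iff_of_nonneg (fun i _ => sq_nonneg (x i.succ))).mp hxs i
      (Finset.mem_univ i)
    exact pow_eq_zero_iff (by norm_num) |>.mp this
  have hyz : ∀ i : Fin n, y i.succ = 0 := by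
    intro i
    have := (Finset.sum_eq_zero_iff_of_nonneg (fun i _ => sq_nonneg (y i.succ))).mp hys i
      (Finset.mem_univ i)
    exact pow_eq_zero_iff (by norm_num) |>.mp this
  constructor
  · funext j
    refine Fin.cases ?_ ?_ j
    · simpa [negE] using ha
    · intro i; simpa [negE] using hxz i
  · funext j
    refine Fin.cases ?_ ?_ j
    · simpa [negE] using hb
    · intro i; simpa [negE] using hyz i
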